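/- Let μ be a radially symmetric probability measure on the unit disk with radial c.d.f. F_R satisfying F_R(r) ≤ 1 - (c_μ/(α+1))(1-r)^{α+1} and 1 - F_R(r) ≤ (C_μ/(α+1))(1-r)^{α+1} for r ∈ [1-ε, 1], where α > -1. Let X_1, …, X_n be i.i.d. ∼ μ and let X^↑_{(n-l+1)} denote the (n-l+1)-th smallest in modulus. If γ_n ∈ (0, ε) satisfies n γ_n^{α+1} → ∞ and γ_n → 0, and l_n = o(n) satisfies l_n · log(n γ_n^{α+1}) = o(n γ_n^{α+1}), then there is c > 0 such that P(|X^↑_{(n-l_n+1)}| ≤ 1 - γ_n) = O(exp(-c n γ_n^{α+1})). -/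

import Mathlib

open MeasureTheory ProbabilityTheory Filter Asymptotics

open Classical in
/-- The `l_n` largest-modulus samples among `n` i.i.d. draws from `μ` all lie within
distance `γ_n` of the unit circle with probability `1 - O(exp(-c n γ_n^{α+1}))`.
The order-statistic event `|X^↑_{(n-l_n+1)}| ≤ 1 - γ_n` is encoded as
`#{i < n : |X_i| > 1 - γ_n} < l_n`. -/
theorem largest_roots_near_circle {Ω : Type*} [MeasurableSpace Ω]
    (P : Measure Ω) [IsProbabilityMeasure P]
    (μ : Measure ℂ) [IsProbabilityMeasure μ]
    (ε α cμ Cμ : ℝ) (hε : 0 < ε) (hε1 : ε ≤ 1) (hα : -1 < α)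
    (hc : 0 < cμ) (hCμ : 0 < Cμ)
    (hsupp : μ {z : ℂ | 1 < ‖z‖} = 0)
    (hsym : ∀ θ : ℝ, μ.map (fun z => Complex.exp (θ * Complex.I) * z) = μ)
    (F : ℝ → ℝ) (hF : ∀ r, F r = (μ {z : ℂ | ‖z‖ ≤ r}).toReal)
    (hFub : ∀ r, 1 - ε ≤ r → r ≤ 1 → F r ≤ 1 - cμ / (α + 1) * (1 - r) ^ (α + 1))
    (hFlb : ∀ r, 1 - ε ≤ r → r ≤ 1 → 1 - F r ≤ Cμ / (α + 1) * (1 - r) ^ (α + 1))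
    (X : ℕ → Ω → ℂ) (hmeas : ∀ i, Measurable (X i))
    (hindep : iIndepFun X P)
    (hid : ∀ i, P.map (X i) = μ)
    (γ : ℕ → ℝ) (hγ : ∀ n, 0 < γ n ∧ γ n < ε)
    (hγ0 : Tendsto γ atTop (nhds 0))
    (hnγ : Tendsto (fun n : ℕ => (n : ℝ) * γ n ^ (α + 1)) atTop atTop)
    (l : ℕ → ℕ)
    (hl : (fun n => (l n : ℝ)) =o[atTop] (fun n => (n : ℝ)))
    (hllog : (fun n => (l n : ℝ) * Real.log ((n : ℝ) * γ n ^ (α + 1))) =o[atTop]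
      (fun n => (n : ℝ) * γ n ^ (α + 1))) :
    ∃ c > (0 : ℝ), ∃ C > (0 : ℝ), ∀ᶠ n in atTop,
      (P {ω | ((Finset.range n).filter fun i => 1 - γ n < ‖X i ω‖).card < l n}).toReal ≤
        C * Real.exp (-c * (n : ℝ) * γ n ^ (α + 1)) := by
  have hα1 : (0 : ℝ) < α + 1 := by linarith
  have hexp1 : Real.exp (-1) < 1 := by
    rw [← Real.exp_zero]; exact Real.exp_lt_exp.2 (by norm_num)
  set a : ℝ := (1 - Real.exp (-1)) * (cμ / (α + 1)) with ha_def
  have ha : 0 < a := mul_pos (by linarith) (div_pos hc hα1)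
  refine ⟨a / 2, half_pos ha, 1, one_pos, ?_⟩
  have E1 := hllog.def (half_pos ha)
  have E2 := hnγ.eventually_ge_atTop (Real.exp 1)
  filter_upwards [E1, E2] with n hE1 hE2
  have hγn := hγ n
  set g : ℝ := γ n with hg_def
  -- the "success probability" lower bound
  set B : Set ℂ := {z : ℂ | 1 - g < ‖z‖} with hB_def
  have hB : MeasurableSet B := (isOpen_lt continuous_const continuous_norm).measurableSet
  set p : ℝ := (μ B).toReal with hp_def
  set q : ℝ := cμ / (α + 1) * g ^ (α + 1) with hq_def
  have hq0 : 0 < q := mul_pos (div_pos hc hα1) (Real.rpow_pos_of_pos hγn.1 _)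
  have hcompl : Bᶜ = {z : ℂ | ‖z‖ ≤ 1 - g} := by
    ext z; simp [hB_def, not_lt]
  have hsum : (μ Bᶜ).toReal + p = 1 := by
    have h := measure_compl hB (measure_ne_top μ B)
    have : μ Bᶜ + μ B = μ Set.univ := by
      rw [h, tsub_add_cancel_of_le (measure_mono (Set.subset_univ B))]
    have h2 : (μ Bᶜ + μ B).toReal = (μ Set.univ).toReal := by rw [this]
    rwa [ENNReal.toReal_add (measure_ne_top _ _) (measure_ne_top _ _), measure_univ,
      ENNReal.toReal_one] at h2
  have hqp : q ≤ p := by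
    have hFb := hFub (1 - g) (by linarith [hγn.2]) (by linarith [hγn.1])
    rw [hF, ← hcompl] at hFb
    have : 1 - (1 - g) = g := by ring
    rw [this] at hFb
    linarith [hsum, hFb]
  -- indicator random variables
  set A : ℕ → Set Ω := fun i => X i ⁻¹' B with hA_def
  have hA : ∀ i, MeasurableSet (A i) := fun i => hmeas i hB
  set Y : ℕ → Ω → ℝ := fun i => (A i).indicator (fun _ => 1) with hY_def
  have hYmeas : ∀ i, Measurable (Y i) := fun i => measurable_const.indicator (hA i)
  have hYindep : iIndepFun Y P := by
    have h := hindep.comp (fun _ => B.indicator (fun _ => (1 : ℝ)))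
      (fun _ => measurable_const.indicator hB)
    have heq : Y = fun i => (B.indicator (fun _ => (1 : ℝ))) ∘ X i := by
      funext i ω
      simp [hY_def, hA_def, Set.indicator_apply, Set.mem_preimage, Function.comp]
    rw [heq]
    exact h
  have hPA : ∀ i, (P (A i)).toReal = p := by
    intro i
    rw [hA_def, hp_def, ← hid i, Measure.map_apply (hmeas i) hB]
  -- mgf of each indicator at t = -1
  have hmgf : ∀ i, mgf (Y i) P (-1) ≤ Real.exp (-((1 - Real.exp (-1)) * q)) := by
    intro i
    have hfun : (fun ω => Real.exp (-1 * Y i ω)) =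
        fun ω => (A i).indicator (fun _ => Real.exp (-1) - 1) ω + 1 := by
      funext ω
      by_cases h : ω ∈ A i <;> simp [hY_def, Set.indicator_of_mem, Set.indicator_of_notMem, h]
    have hint : Integrable ((A i).indicator (fun _ => Real.exp (-1) - 1)) P :=
      (integrable_const _).indicator (hA i)
    have hval : mgf (Y i) P (-1) = 1 - (1 - Real.exp (-1)) * p := by
      rw [mgf, hfun, integral_add hint (integrable_const 1), integral_const,
        integral_indicator_const _ (hA i), measureReal_def, hPA i]
      simp [measure_univ]
      ring
    rw [hval]
    have h1 : 1 - (1 - Real.exp (-1)) * p ≤ 1 - (1 - Real.exp (-1)) * q := by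
      nlinarith
    refine h1.trans ?_
    have := Real.add_one_le_exp (-((1 - Real.exp (-1)) * q))
    linarith
  -- sum of indicators
  set S : Ω → ℝ := ∑ i ∈ Finset.range n, Y i with hS_def
  have hSmeas : Measurable S := by
    have : S = fun ω => ∑ i ∈ Finset.range n, Y i ω := by
      funext ω; rw [hS_def, Finset.sum_apply]
    rw [this]; exact Finset.measurable_sum _ fun i _ => hYmeas i
  have hSnonneg : ∀ ω, 0 ≤ S ω := by
    intro ω
    rw [hS_def, Finset.sum_apply]
    exact Finset.sum_nonneg fun i _ => Set.indicator_nonneg (fun _ _ => zero_le_one) ω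
  have hSint : Integrable (fun ω => Real.exp (-1 * S ω)) P := by
    refine Integrable.mono' (integrable_const 1)
      ((hSmeas.const_mul (-1)).exp.aestronglyMeasurable) (ae_of_all _ fun ω => ?_)
    rw [Real.norm_eq_abs, abs_of_pos (Real.exp_pos _)]
    exact Real.exp_le_one_iff.2 (by nlinarith [hSnonneg ω])
  -- Chernoff bound
  have hcher := measure_le_le_exp_mul_mgf (μ := P) (X := S) (l n : ℝ) (t := -1)
    (by norm_num) hSint
  have hmgfS : mgf S P (-1) = ∏ i ∈ Finset.range n, mgf (Y i) P (-1) :=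
    hYindep.mgf_sum hYmeas _
  -- event inclusion
  have hsub : {ω | ((Finset.range n).filter fun i => 1 - g < ‖X i ω‖).card < l n} ⊆
      {ω | S ω ≤ (l n : ℝ)} := by
    intro ω hω
    simp only [Set.mem_setOf_eq] at hω ⊢
    have hcard : S ω = (((Finset.range n).filter fun i => 1 - g < ‖X i ω‖).card : ℝ) := by
      rw [hS_def, Finset.sum_apply, ← Finset.sum_boole]
      refine Finset.sum_congr rfl fun i _ => ?_
      simp [hY_def, hA_def, Set.indicator_apply, Set.mem_preimage, hB_def]
    rw [hcard]
    exact_mod_cast hω.le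
  have hmono : (P {ω | ((Finset.range n).filter fun i => 1 - g < ‖X i ω‖).card < l n}).toReal ≤
      (P {ω | S ω ≤ (l n : ℝ)}).toReal :=
    ENNReal.toReal_mono (measure_ne_top _ _) (measure_mono hsub)
  -- combine
  have hprod : ∏ i ∈ Finset.range n, mgf (Y i) P (-1) ≤
      Real.exp (-((1 - Real.exp (-1)) * q)) ^ n := by
    calc ∏ i ∈ Finset.range n, mgf (Y i) P (-1)
        ≤ ∏ _i ∈ Finset.range n, Real.exp (-((1 - Real.exp (-1)) * q)) :=
          Finset.prod_le_prod (fun i _ => mgf_nonneg) (fun i _ => hmgf i)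
      _ = Real.exp (-((1 - Real.exp (-1)) * q)) ^ n := by
          rw [Finset.prod_const, Finset.card_range]
  have hln : (l n : ℝ) ≤ a / 2 * ((n : ℝ) * g ^ (α + 1)) := by
    have hng : (0 : ℝ) < (n : ℝ) * g ^ (α + 1) := lt_of_lt_of_le (Real.exp_pos 1) hE2
    have hlog : (1 : ℝ) ≤ Real.log ((n : ℝ) * g ^ (α + 1)) := by
      have := Real.log_le_log (Real.exp_pos 1) hE2
      rwa [Real.log_exp] at this
    have h1 : (l n : ℝ) ≤ (l n : ℝ) * Real.log ((n : ℝ) * g ^ (α + 1)) := by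
      nlinarith [(Nat.cast_nonneg (l n) : (0:ℝ) ≤ (l n : ℝ))]
    have h2 : (l n : ℝ) * Real.log ((n : ℝ) * g ^ (α + 1)) ≤
        a / 2 * ((n : ℝ) * g ^ (α + 1)) := by
      have := hE1
      simp only [Real.norm_eq_abs] at this
      calc (l n : ℝ) * Real.log ((n : ℝ) * g ^ (α + 1))
          ≤ |(l n : ℝ) * Real.log ((n : ℝ) * g ^ (α + 1))| := le_abs_self _
        _ ≤ a / 2 * |(n : ℝ) * g ^ (α + 1)| := this
        _ = a / 2 * ((n : ℝ) * g ^ (α + 1)) := by rw [abs_of_pos hng]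
    exact h1.trans h2
  calc (P {ω | ((Finset.range n).filter fun i => 1 - g < ‖X i ω‖).card < l n}).toReal
      ≤ (P {ω | S ω ≤ (l n : ℝ)}).toReal := hmono
    _ ≤ Real.exp (-(-1) * (l n : ℝ)) * mgf S P (-1) := hcher
    _ ≤ Real.exp (-(-1) * (l n : ℝ)) * Real.exp (-((1 - Real.exp (-1)) * q)) ^ n := by
        have := hprod
        rw [hmgfS]
        exact mul_le_mul_of_nonneg_left this (Real.exp_pos _).le
    _ = Real.exp ((l n : ℝ) + (n : ℝ) * (-((1 - Real.exp (-1)) * q))) := by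
        rw [← Real.exp_nat_mul, ← Real.exp_add]
        norm_num
    _ ≤ 1 * Real.exp (-(a / 2) * (n : ℝ) * g ^ (α + 1)) := by
        rw [one_mul, Real.exp_le_exp, hq_def, ha_def]
        nlinarith [hln]
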